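/- One has the inclusions CP_Q~ ⊆ NN_Q~ ⊆ 4·(CP_Q~ − CP_Q~), where CP_Q~ − CP_Q~ = {a − b : a, b ∈ CP_Q~} is the difference body of the section CP_Q~. -/

import Mathlib

open MeasureTheory Finset

noncomputable section

/-- The space `Q` of even quartics, represented by symmetric coefficient matrices
`a : Fin n → Fin n → ℝ` (the quartic being `∑ i j, a i j * x i ^ 2 * x j ^ 2`). -/
def symSub (n : ℕ) : Submodule ℝ (Fin n → Fin n → ℝ) where
  carrier := {a | ∀ i j, a i j = a j i}
  add_mem' := by
    intro a b ha hb i j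
    simp only [Pi.add_apply, ha i j, hb i j]
  zero_mem' := by intro i j; rfl
  smul_mem' := by
    intro c a ha i j
    simp only [Pi.smul_apply, smul_eq_mul, ha i j]

/-- The even quartic form corresponding to a symmetric coefficient matrix. -/
def qfun {n : ℕ} (a : symSub n) (x : EuclideanSpace ℝ (Fin n)) : ℝ :=
  ∑ i, ∑ j, a.1 i j * (x i)^2 * (x j)^2

/-- The element of `Q` corresponding to `r(x) = (x_1^2 + ... + x_n^2)^2`. -/
def rQ (n : ℕ) : symSub n := ⟨fun _ _ => 1, fun _ _ => rfl⟩

/-- The section `K~ = {f ∈ M : f + r ∈ K}` of a cone `K ⊆ Q`. -/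
def sect {n : ℕ} (σ : Measure (EuclideanSpace ℝ (Fin n))) (K : Set (symSub n)) :
    Set (symSub n) :=
  {a | (∫ x, qfun a x ∂σ) = 0 ∧ a + rQ n ∈ K}

/-- The volume radius of a subset of `M`, computed through a linear isometry `ψ`
of `ℝ^(dim M)` (with Lebesgue measure) onto `M`. -/
def vrad {n d : ℕ} (ψ : EuclideanSpace ℝ (Fin d) →ₗ[ℝ] symSub n)
    (C : Set (symSub n)) : ℝ :=
  ((volume (⇑ψ ⁻¹' C)).toReal /
    (volume (Metric.closedBall (0 : EuclideanSpace ℝ (Fin d)) 1)).toReal) ^ ((1:ℝ)/(d:ℝ))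

/-- `NN_Q`: even quartics with nonnegative coefficients. -/
def NNQ (n : ℕ) : Set (symSub n) :=
  {a | ∀ i j, 0 ≤ a.1 i j}

/-- `CP_Q`: sums of squares of quadratic forms in `x_1^2, …, x_n^2` having
nonnegative coefficients. -/
def CPQ (n : ℕ) : Set (symSub n) :=
  {a | ∃ (k : ℕ) (c : Fin k → Fin n → ℝ), (∀ i j, 0 ≤ c i j) ∧
    ∀ x : EuclideanSpace ℝ (Fin n), qfun a x = ∑ i, (∑ j, c i j * (x j)^2)^2}

def rotFun (i j : Fin n) (x : EuclideanSpace ℝ (Fin n)) : EuclideanSpace ℝ (Fin n) :=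
  (WithLp.equiv 2 (Fin n → ℝ)).symm fun k =>
    if k = i then (x i + x j) / Real.sqrt 2
    else if k = j then (x i - x j) / Real.sqrt 2
    else x k

lemma rotFun_apply (i j : Fin n) (x : EuclideanSpace ℝ (Fin n)) (k : Fin n) :
    rotFun i j x k =
      if k = i then (x i + x j) / Real.sqrt 2
      else if k = j then (x i - x j) / Real.sqrt 2
      else x k := rfl

lemma sqrt2_sq : (Real.sqrt 2)^2 = 2 := Real.sq_sqrt (by norm_num)
lemma sqrt2_ne : Real.sqrt 2 ≠ 0 := by positivity

lemma rotFun_invol (i j : Fin n) (hij : i ≠ j) (x : EuclideanSpace ℝ (Fin n)) :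
    rotFun i j (rotFun i j x) = x := by
  ext k
  have h2 := sqrt2_sq
  have hne := sqrt2_ne
  simp only [rotFun_apply]
  rcases eq_or_ne k i with rfl | hki
  · simp only [if_pos rfl, if_neg hij, if_neg (Ne.symm hij), ↓reduceIte]
    field_simp
    rw [h2]; ring
  · rcases eq_or_ne k j with rfl | hkj
    · simp only [if_neg hki, if_pos rfl, if_neg hij, if_neg (Ne.symm hij), ↓reduceIte]
      field_simp
      rw [h2]; ring
    · simp [hki, hkj]

lemma rotFun_sum_sq (i j : Fin n) (hij : i ≠ j) (x : EuclideanSpace ℝ (Fin n)) :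
    ∑ k, (rotFun i j x k)^2 = ∑ k, (x k)^2 := by
  have h2 := sqrt2_sq
  have hne := sqrt2_ne
  have key : ∑ k, ((rotFun i j x k)^2 - (x k)^2) = 0 := by
    rw [← Finset.sum_subset (Finset.subset_univ ({i, j} : Finset (Fin n)))]
    · rw [Finset.sum_pair hij]
      simp only [rotFun_apply, if_pos rfl, if_neg (Ne.symm hij), if_neg hij, ↓reduceIte]
      field_simp
      rw [h2]; ring
    · intro k _ hk
      simp only [Finset.mem_insert, Finset.mem_singleton, not_or] at hk
      simp [rotFun_apply, hk.1, hk.2]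
  have := Finset.sum_sub_distrib (s := (univ : Finset (Fin n)))
    (f := fun k => (rotFun i j x k)^2) (g := fun k => (x k)^2)
  linarith [key, this]

lemma sum_sq_eq_norm (x : EuclideanSpace ℝ (Fin n)) : ∑ k, (x k)^2 = ‖x‖^2 := by
  rw [EuclideanSpace.norm_eq, Real.sq_sqrt (by positivity)]
  simp [sq_abs]

def rotIso (i j : Fin n) (hij : i ≠ j) :
    EuclideanSpace ℝ (Fin n) ≃ₗᵢ[ℝ] EuclideanSpace ℝ (Fin n) where
  toFun := rotFun i j
  invFun := rotFun i j
  left_inv := rotFun_invol i j hij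
  right_inv := rotFun_invol i j hij
  map_add' x y := by
    ext k
    simp only [rotFun_apply, PiLp.add_apply]
    split_ifs <;> ring
  map_smul' t x := by
    ext k
    simp only [rotFun_apply, PiLp.smul_apply, smul_eq_mul, RingHom.id_apply]
    split_ifs <;> ring
  norm_map' x := by
    have h1 := rotFun_sum_sq i j hij x
    rw [sum_sq_eq_norm, sum_sq_eq_norm] at h1
    show ‖rotFun i j x‖ = ‖x‖
    nlinarith [norm_nonneg (rotFun i j x), norm_nonneg x]

lemma rotIso_apply (i j : Fin n) (hij : i ≠ j) (x : EuclideanSpace ℝ (Fin n)) :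
    rotIso i j hij x = rotFun i j x := rfl

lemma sq_apply_le (x : EuclideanSpace ℝ (Fin n)) (i : Fin n) : (x i)^2 ≤ ‖x‖^2 := by
  rw [← sum_sq_eq_norm]
  exact Finset.single_le_sum (f := fun k => (x k)^2) (fun k _ => sq_nonneg _) (mem_univ i)

section Moments
variable (σ : Measure (EuclideanSpace ℝ (Fin n))) (hσprob : IsProbabilityMeasure σ)
  (hσsphere : σ (Metric.sphere (0 : EuclideanSpace ℝ (Fin n)) 1) = 1)
include hσprob hσsphere

lemma ae_norm_one : ∀ᵐ x ∂σ, ‖x‖ = 1 := by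
  have hmeas : MeasurableSet (Metric.sphere (0 : EuclideanSpace ℝ (Fin n)) 1) :=
    Metric.isClosed_sphere.measurableSet
  have : σ (Metric.sphere (0 : EuclideanSpace ℝ (Fin n)) 1)ᶜ = 0 := by
    rw [measure_compl hmeas (by rw [hσsphere]; exact ENNReal.one_ne_top), hσsphere]
    simp
  filter_upwards [MeasureTheory.measure_eq_zero_iff_ae_notMem.mp this] with x hx
  simpa [Metric.mem_sphere, dist_zero_right] using not_not.mp hx

lemma integ_mom (i j : Fin n) :
    Integrable (fun x : EuclideanSpace ℝ (Fin n) => (x i)^2 * (x j)^2) σ := by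
  have hcont : Continuous (fun x : EuclideanSpace ℝ (Fin n) => (x i)^2 * (x j)^2) :=
    ((PiLp.continuous_apply 2 _ i).pow 2).mul ((PiLp.continuous_apply 2 _ j).pow 2)
  apply Integrable.mono' (integrable_const (1:ℝ)) hcont.aestronglyMeasurable
  filter_upwards [ae_norm_one σ hσprob hσsphere] with x hx
  have h1 : (x i)^2 ≤ 1 := by have := sq_apply_le x i; rw [hx] at this; simpa using this
  have h2 : (x j)^2 ≤ 1 := by have := sq_apply_le x j; rw [hx] at this; simpa using this
  rw [Real.norm_eq_abs, abs_of_nonneg (by positivity)]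
  nlinarith [sq_nonneg (x i), sq_nonneg (x j)]

def Jm (i j : Fin n) : ℝ := ∫ x, (x i)^2 * (x j)^2 ∂σ

omit hσprob hσsphere in
lemma Jm_nonneg (i j : Fin n) : 0 ≤ Jm σ i j :=
  integral_nonneg fun x => by positivity

lemma integral_qfun (a : symSub n) :
    ∫ x, qfun a x ∂σ = ∑ i, ∑ j, a.1 i j * Jm σ i j := by
  unfold qfun Jm
  rw [integral_finset_sum]
  · refine Finset.sum_congr rfl fun i _ => ?_
    rw [integral_finset_sum]
    · refine Finset.sum_congr rfl fun j _ => ?_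
      have heq : (fun x : EuclideanSpace ℝ (Fin n) => a.1 i j * x i ^ 2 * x j ^ 2)
          = fun x => a.1 i j * (x i ^ 2 * x j ^ 2) := by funext x; ring
      show (∫ x, a.1 i j * x i ^ 2 * x j ^ 2 ∂σ) = _
      rw [heq, integral_const_mul]
    · intro j _
      have := (integ_mom σ hσprob hσsphere i j).const_mul (a.1 i j)
      simpa [mul_assoc] using this
  · intro i _
    apply integrable_finset_sum
    intro j _
    have := (integ_mom σ hσprob hσsphere i j).const_mul (a.1 i j)
    simpa [mul_assoc] using this

lemma sumJ : ∑ i, ∑ j, Jm σ i j = 1 := by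
  have h1 : ∫ x, qfun (rQ n) x ∂σ = 1 := by
    have : ∀ᵐ x ∂σ, qfun (rQ n) x = 1 := by
      filter_upwards [ae_norm_one σ hσprob hσsphere] with x hx
      have : qfun (rQ n) x = (∑ k, (x k)^2) * (∑ k, (x k)^2) := by
        unfold qfun rQ
        rw [Finset.sum_mul_sum]
        refine Finset.sum_congr rfl fun i _ => Finset.sum_congr rfl fun j _ => by ring
      rw [this, sum_sq_eq_norm, hx]
      norm_num
    rw [integral_congr_ae this]
    simp
  have h2 := integral_qfun σ hσprob hσsphere (rQ n)
  rw [h1] at h2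
  have := h2.symm
  simpa [rQ] using this

lemma Jm_key (hσinv : ∀ O : EuclideanSpace ℝ (Fin n) ≃ₗᵢ[ℝ] EuclideanSpace ℝ (Fin n),
      Measure.map (⇑O) σ = σ) (i j : Fin n) (hij : i ≠ j) :
    Jm σ i i + Jm σ j j = 6 * Jm σ i j := by
  have h2 := sqrt2_sq
  have hne := sqrt2_ne
  have hcont : Continuous (fun x : EuclideanSpace ℝ (Fin n) => (x i)^2 * (x j)^2) :=
    ((PiLp.continuous_apply 2 _ i).pow 2).mul ((PiLp.continuous_apply 2 _ j).pow 2)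
  have hmap := hσinv (rotIso i j hij)
  have step1 : Jm σ i j =
      ∫ x, ((rotIso i j hij x) i)^2 * ((rotIso i j hij x) j)^2 ∂σ := by
    unfold Jm
    conv_lhs => rw [← hmap]
    rw [integral_map (rotIso i j hij).continuous.aemeasurable
      (hmap ▸ hcont.aestronglyMeasurable)]
  have hpt : ∀ x : EuclideanSpace ℝ (Fin n),
      ((rotIso i j hij x) i)^2 * ((rotIso i j hij x) j)^2
      = (1/4) * ((x i)^2 * (x i)^2) - (1/2) * ((x i)^2 * (x j)^2)
        + (1/4) * ((x j)^2 * (x j)^2) := by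
    intro x
    have e1 : rotIso i j hij x i = (x i + x j) / Real.sqrt 2 := by
      rw [rotIso_apply, rotFun_apply, if_pos rfl]
    have e2 : rotIso i j hij x j = (x i - x j) / Real.sqrt 2 := by
      rw [rotIso_apply, rotFun_apply, if_neg (Ne.symm hij), if_pos rfl]
    rw [e1, e2, div_pow, div_pow, h2]
    ring
  have hii := integ_mom σ hσprob hσsphere i i
  have hij' := integ_mom σ hσprob hσsphere i j
  have hjj := integ_mom σ hσprob hσsphere j j
  have hint : ∫ x, ((rotIso i j hij x) i)^2 * ((rotIso i j hij x) j)^2 ∂σ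
      = (1/4) * Jm σ i i - (1/2) * Jm σ i j + (1/4) * Jm σ j j := by
    simp only [hpt]
    rw [integral_add (μ := σ)
        (f := fun x : EuclideanSpace ℝ (Fin n) =>
          1/4 * (x i ^ 2 * x i ^ 2) - 1/2 * (x i ^ 2 * x j ^ 2))
        (g := fun x : EuclideanSpace ℝ (Fin n) => 1/4 * (x j ^ 2 * x j ^ 2))
        ((hii.const_mul _).sub (hij'.const_mul _)) (hjj.const_mul _),
      integral_sub (hii.const_mul _) (hij'.const_mul _),
      integral_const_mul, integral_const_mul, integral_const_mul]
    rfl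
  rw [hint] at step1
  linarith
end Moments

section CPQ

lemma qfun_eval (a : symSub n) (x : EuclideanSpace ℝ (Fin n)) :
    qfun a x = ∑ i, ∑ j, a.1 i j * (x i)^2 * (x j)^2 := rfl

lemma cpq_zero : (0 : symSub n) ∈ CPQ n := by
  refine ⟨0, fun _ _ => 0, fun i j => le_refl 0, fun x => ?_⟩
  simp [qfun]

lemma cpq_add {a b : symSub n} (ha : a ∈ CPQ n) (hb : b ∈ CPQ n) : a + b ∈ CPQ n := by
  obtain ⟨k1, c1, hc1, hq1⟩ := ha
  obtain ⟨k2, c2, hc2, hq2⟩ := hb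
  refine ⟨k1 + k2, Fin.append c1 c2, ?_, fun x => ?_⟩
  · intro i j
    refine Fin.addCases (fun i0 => ?_) (fun i0 => ?_) i
    · rw [Fin.append_left]; exact hc1 i0 j
    · rw [Fin.append_right]; exact hc2 i0 j
  · have hq : qfun (a + b) x = qfun a x + qfun b x := by
      simp [qfun, Finset.sum_add_distrib, add_mul]
    rw [hq, hq1, hq2, Fin.sum_univ_add]
    congr 1
    · exact Finset.sum_congr rfl fun i0 _ => by rw [Fin.append_left]
    · exact Finset.sum_congr rfl fun i0 _ => by rw [Fin.append_right]

lemma cpq_smul {a : symSub n} {t : ℝ} (ht : 0 ≤ t) (ha : a ∈ CPQ n) : t • a ∈ CPQ n := by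
  obtain ⟨k, c, hc, hq⟩ := ha
  refine ⟨k, fun i j => Real.sqrt t * c i j, fun i j => mul_nonneg (Real.sqrt_nonneg t) (hc i j), fun x => ?_⟩
  have hq' : qfun (t • a) x = t * qfun a x := by
    simp [qfun, Finset.mul_sum, mul_assoc]
  rw [hq', hq, Finset.mul_sum]
  refine Finset.sum_congr rfl fun i0 _ => ?_
  have : ∑ j, Real.sqrt t * c i0 j * (x j)^2 = Real.sqrt t * ∑ j, c i0 j * (x j)^2 := by
    rw [Finset.mul_sum]; exact Finset.sum_congr rfl fun j _ => by ring
  rw [this, mul_pow, Real.sq_sqrt ht]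

lemma cpq_sum {ι : Type*} (s : Finset ι) (f : ι → symSub n)
    (hf : ∀ i ∈ s, f i ∈ CPQ n) : ∑ i ∈ s, f i ∈ CPQ n := by
  classical
  induction s using Finset.induction_on with
  | empty => simpa using cpq_zero
  | @insert a s' hni ih =>
    rw [Finset.sum_insert hni]
    exact cpq_add (hf a (Finset.mem_insert_self a s'))
      (ih fun i hi => hf i (Finset.mem_insert_of_mem hi))

/-- basic CP element `v ⊗ v`. -/
def smat (v : Fin n → ℝ) : symSub n := ⟨fun i j => v i * v j, fun i j => mul_comm _ _⟩

lemma cpq_smat (v : Fin n → ℝ) (hv : ∀ j, 0 ≤ v j) : smat v ∈ CPQ n := by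
  refine ⟨1, fun _ => v, fun _ j => hv j, fun x => ?_⟩
  rw [Fin.sum_univ_one, qfun_eval, pow_two, Finset.sum_mul_sum]
  exact Finset.sum_congr rfl fun i _ => Finset.sum_congr rfl fun j _ => by
    show (v i * v j) * (x i)^2 * (x j)^2 = _
    ring

end CPQ

section Eval

lemma eval_sq_single (v : Fin n → ℝ) (i : Fin n) :
    ∑ l, v l * ((EuclideanSpace.single i (1:ℝ)) l)^2 = v i := by
  simp [EuclideanSpace.single_apply, apply_ite (· ^ 2)]

lemma pair_apply_sq (i j : Fin n) (hij : i ≠ j) (l : Fin n) :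
    ((EuclideanSpace.single i (1:ℝ) + EuclideanSpace.single j (1:ℝ)) l)^2
      = (if l = i then 1 else 0) + (if l = j then 1 else 0) := by
  have h : (EuclideanSpace.single i (1:ℝ) + EuclideanSpace.single j (1:ℝ)) l
      = (if l = i then 1 else 0) + (if l = j then 1 else 0) := by
    simp [EuclideanSpace.single_apply]
  rw [h]
  rcases eq_or_ne l i with rfl | hli
  · simp [hij]
  · rcases eq_or_ne l j with rfl | hlj
    · simp [hli]
    · simp [hli, hlj]

lemma eval_sq_pair (v : Fin n → ℝ) (i j : Fin n) (hij : i ≠ j) :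
    ∑ l, v l * ((EuclideanSpace.single i (1:ℝ) + EuclideanSpace.single j (1:ℝ)) l)^2
      = v i + v j := by
  simp only [pair_apply_sq i j hij, mul_add, Finset.sum_add_distrib]
  simp

lemma qfun_as (a : symSub n) (x : EuclideanSpace ℝ (Fin n)) :
    qfun a x = ∑ k, (∑ l, a.1 k l * (x l)^2) * (x k)^2 := by
  rw [qfun_eval]
  refine Finset.sum_congr rfl fun k _ => ?_
  rw [Finset.sum_mul]
  exact Finset.sum_congr rfl fun l _ => by ring

lemma qfun_single (a : symSub n) (i : Fin n) :
    qfun a (EuclideanSpace.single i (1:ℝ)) = a.1 i i := by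
  rw [qfun_as, eval_sq_single (fun k => ∑ l, a.1 k l * ((EuclideanSpace.single i (1:ℝ)) l)^2) i,
    eval_sq_single (a.1 i) i]

lemma qfun_pair (a : symSub n) (i j : Fin n) (hij : i ≠ j) :
    qfun a (EuclideanSpace.single i (1:ℝ) + EuclideanSpace.single j (1:ℝ))
      = a.1 i i + a.1 i j + a.1 j i + a.1 j j := by
  rw [qfun_as, eval_sq_pair _ i j hij, eval_sq_pair (a.1 i) i j hij,
    eval_sq_pair (a.1 j) i j hij]
  ring

lemma cpq_subset_nnq : CPQ n ⊆ NNQ n := by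
  rintro a ⟨k, c, hc, hq⟩ i j
  have hii : a.1 i i = ∑ t, (c t i)^2 := by
    have h := hq (EuclideanSpace.single i 1)
    rw [qfun_single] at h
    rw [h]
    exact Finset.sum_congr rfl fun t _ => by rw [eval_sq_single (c t) i]
  rcases eq_or_ne i j with rfl | hij
  · rw [hii]; exact Finset.sum_nonneg fun t _ => sq_nonneg _
  · have hjj : a.1 j j = ∑ t, (c t j)^2 := by
      have h := hq (EuclideanSpace.single j 1)
      rw [qfun_single] at h
      rw [h]
      exact Finset.sum_congr rfl fun t _ => by rw [eval_sq_single (c t) j]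
    have hp : a.1 i i + a.1 i j + a.1 j i + a.1 j j = ∑ t, (c t i + c t j)^2 := by
      have h := hq (EuclideanSpace.single i (1:ℝ) + EuclideanSpace.single j (1:ℝ))
      rw [qfun_pair a i j hij] at h
      rw [h]
      exact Finset.sum_congr rfl fun t _ => by rw [eval_sq_pair (c t) i j hij]
    have hsym : a.1 i j = a.1 j i := a.2 i j
    have hexp : ∑ t, (c t i + c t j)^2
        = ∑ t, (c t i)^2 + ∑ t, (c t j)^2 + ∑ t, 2 * (c t i * c t j) := by
      rw [← Finset.sum_add_distrib, ← Finset.sum_add_distrib]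
      exact Finset.sum_congr rfl fun t _ => by ring
    have hnn : 0 ≤ ∑ t, 2 * (c t i * c t j) :=
      Finset.sum_nonneg fun t _ => by
        have := mul_nonneg (hc t i) (hc t j); linarith
    rw [hexp] at hp
    linarith

end Eval

lemma key_id {n : ℕ} (m : Fin n → Fin n → ℝ) (hsym : ∀ i j, m i j = m j i) (i j : Fin n) :
    ∑ p : Fin n × Fin n, m p.1 p.2 / 8 *
      (((if i = p.1 then (1:ℝ) else 0) + (if i = p.2 then 1 else 0)) *
       ((if j = p.1 then (1:ℝ) else 0) + (if j = p.2 then 1 else 0)))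
    = m i j / 4 + (if i = j then (∑ l, m i l) / 4 else 0) := by
  have hrow : ∑ k, m k i = ∑ l, m i l := Finset.sum_congr rfl fun k _ => hsym k i
  rcases eq_or_ne i j with rfl | hij
  · simp only [if_pos rfl, Fintype.sum_prod_type, mul_add, add_mul, mul_ite, ite_mul,
      mul_one, mul_zero, one_mul, zero_mul, Finset.sum_add_distrib, Finset.sum_ite_eq,
      Finset.sum_ite_eq', Finset.mem_univ, if_true, Finset.sum_div, Finset.sum_ite_irrel,
      Finset.sum_const_zero]
    have h8 : ∑ k, m k i / 8 = ∑ l, m i l / 8 := by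
      rw [← Finset.sum_div, ← Finset.sum_div, hrow]
    rw [h8]
    have e : ∑ x : Fin n, m i x / 8 + ∑ x : Fin n, m i x / 8 = ∑ x : Fin n, m i x / 4 := by
      rw [← Finset.sum_add_distrib]
      exact Finset.sum_congr rfl fun x _ => by ring
    linarith
  · simp only [Fintype.sum_prod_type, mul_add, add_mul, mul_ite, ite_mul,
      mul_one, mul_zero, one_mul, zero_mul, Finset.sum_add_distrib, Finset.sum_ite_eq,
      Finset.sum_ite_eq', Finset.mem_univ, if_true, if_neg hij, Finset.sum_div,
      Finset.sum_ite_irrel, Finset.sum_const_zero]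
    rw [hsym j i]
    ring

lemma diag_id {n : ℕ} (sr : Fin n → ℝ) (i j : Fin n) :
    ∑ i0 : Fin n, sr i0 / 4 *
      ((if i = i0 then (1:ℝ) else 0) * (if j = i0 then 1 else 0))
    = if i = j then sr i / 4 else 0 := by
  rcases eq_or_ne i j with rfl | hij
  · simp [mul_ite, ite_mul, Finset.sum_ite_eq]
  · simp only [mul_ite, ite_mul, mul_one, mul_zero, one_mul, zero_mul,
      Finset.sum_ite_eq, Finset.mem_univ, if_true, if_neg hij]

/-- `CP_Q~ ⊆ NN_Q~ ⊆ 4·(CP_Q~ − CP_Q~)`. -/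
theorem stmt13 (n : ℕ) (hn : 1 ≤ n)
    (σ : Measure (EuclideanSpace ℝ (Fin n)))
    (hσprob : IsProbabilityMeasure σ)
    (hσsphere : σ (Metric.sphere (0 : EuclideanSpace ℝ (Fin n)) 1) = 1)
    (hσinv : ∀ O : EuclideanSpace ℝ (Fin n) ≃ₗᵢ[ℝ] EuclideanSpace ℝ (Fin n),
      Measure.map (⇑O) σ = σ) :
    sect σ (CPQ n) ⊆ sect σ (NNQ n) ∧
    sect σ (NNQ n) ⊆
      {h : symSub n | ∃ a ∈ sect σ (CPQ n), ∃ b ∈ sect σ (CPQ n),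
        h = (4:ℝ) • (a - b)} := by
  constructor
  · rintro h ⟨hint, hcp⟩
    exact ⟨hint, cpq_subset_nnq hcp⟩
  · rintro h ⟨hint, hnn⟩
    set m : symSub n := h + rQ n with hmdef
    have hm : ∀ i j, 0 ≤ m.1 i j := hnn
    have hmval : ∀ i j, m.1 i j = h.1 i j + 1 := fun i j => rfl
    set J : Fin n → Fin n → ℝ := Jm σ with hJdef
    set sr : Fin n → ℝ := fun i => ∑ l, m.1 i l with hsrdef
    set X : ℝ := ∑ i, sr i * J i i with hXdef
    set α : ℝ := -(1/4) - X/4 with hαdef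
    have hrow : ∀ i : Fin n, ∑ k, m.1 k i = sr i := fun i =>
      Finset.sum_congr rfl fun k _ => m.2 k i
    have hsr : ∀ i, 0 ≤ sr i := fun i => Finset.sum_nonneg fun l _ => hm i l
    have hJnn : ∀ i j, 0 ≤ J i j := fun i j => Jm_nonneg σ i j
    have hsumJ : ∑ i, ∑ j, J i j = 1 := sumJ σ hσprob hσsphere
    have hTh : ∑ i, ∑ j, h.1 i j * J i j = 0 := by
      rw [hJdef, ← integral_qfun σ hσprob hσsphere h]; exact hint
    have hTm : ∑ i, ∑ j, m.1 i j * J i j = 1 := by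
      have e : ∀ i j, m.1 i j * J i j = h.1 i j * J i j + J i j := fun i j => by
        rw [hmval]; ring
      simp only [e, Finset.sum_add_distrib]
      rw [hTh, hsumJ]; ring
    -- the bound X ≤ 3
    have hflip : ∑ i, ∑ l, m.1 i l * J i i = ∑ i, ∑ l, m.1 i l * J l l := by
      rw [Finset.sum_comm]
      exact Finset.sum_congr rfl fun x _ => Finset.sum_congr rfl fun y _ => by
        rw [m.2 y x]
    have hXform : X = ∑ i, ∑ l, m.1 i l * J i i := by
      rw [hXdef]
      exact Finset.sum_congr rfl fun i _ => by rw [hsrdef, Finset.sum_mul]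
    have hX3 : X ≤ 3 := by
      have h2X : 2 * X = ∑ i, ∑ l, m.1 i l * (J i i + J l l) := by
        have e : ∑ i, ∑ l, m.1 i l * (J i i + J l l)
            = (∑ i, ∑ l, m.1 i l * J i i) + ∑ i, ∑ l, m.1 i l * J l l := by
          simp only [mul_add, Finset.sum_add_distrib]
        rw [e, ← hflip, ← hXform]; ring
      have hle : ∑ i, ∑ l, m.1 i l * (J i i + J l l)
          ≤ ∑ i, ∑ l, m.1 i l * (6 * J i l) := by
        refine Finset.sum_le_sum fun i _ => Finset.sum_le_sum fun l _ => ?_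
        rcases eq_or_ne i l with rfl | hil
        · have h1 := hJnn i i; have h2 := hm i i; nlinarith
        · have hk := Jm_key σ hσprob hσsphere hσinv i l hil
          rw [hJdef, hk]
      have e6 : ∑ i, ∑ l, m.1 i l * (6 * J i l) = 6 * ∑ i, ∑ l, m.1 i l * J i l := by
        rw [Finset.mul_sum]
        refine Finset.sum_congr rfl fun i _ => ?_
        rw [Finset.mul_sum]
        exact Finset.sum_congr rfl fun l _ => by ring
      rw [e6, hTm] at hle
      linarith
    -- the two matrices
    set amat : symSub n := ⟨fun i j => m.1 i j / 4 + (if i = j then sr i / 4 else 0) + α,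
      by
        intro i j
        rcases eq_or_ne i j with rfl | hne
        · rfl
        · simp only [if_neg hne, if_neg (Ne.symm hne), m.2 i j]⟩ with hamat
    set bmat : symSub n := ⟨fun i j => (if i = j then sr i / 4 else 0) + 1/4 + α,
      by
        intro i j
        rcases eq_or_ne i j with rfl | hne
        · rfl
        · simp only [if_neg hne, if_neg (Ne.symm hne)]⟩ with hbmat
    have hacoe : ∀ i j, amat.1 i j = m.1 i j / 4 + (if i = j then sr i / 4 else 0) + α :=
      fun i j => rfl
    have hbcoe : ∀ i j, bmat.1 i j = (if i = j then sr i / 4 else 0) + 1/4 + α :=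
      fun i j => rfl
    -- the identity h = 4 • (amat - bmat)
    have hid : h = (4:ℝ) • (amat - bmat) := by
      apply Subtype.ext
      funext i j
      have hc : ((4:ℝ) • (amat - bmat)).1 i j = 4 * (amat.1 i j - bmat.1 i j) := rfl
      rw [hc, hacoe, hbcoe]
      have := hmval i j
      ring_nf
      linarith [hmval i j]
    -- integral computations
    have e1 : ∑ i, ∑ j, (m.1 i j / 4) * J i j = 1/4 := by
      have e : ∀ i : Fin n, ∑ j, (m.1 i j / 4) * J i j = (∑ j, m.1 i j * J i j) / 4 :=
        fun i => by
          rw [Finset.sum_div]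
          exact Finset.sum_congr rfl fun j _ => by ring
      simp only [e]
      rw [← Finset.sum_div, hTm]
    have e2 : ∑ i, ∑ j, (if i = j then sr i / 4 else 0) * J i j = X / 4 := by
      have e : ∀ i : Fin n, ∑ j, (if i = j then sr i / 4 else 0) * J i j
          = sr i * J i i / 4 := fun i => by
        simp only [ite_mul, zero_mul]
        rw [Finset.sum_ite_eq, if_pos (Finset.mem_univ i)]
        ring
      simp only [e]
      rw [hXdef, Finset.sum_div]
    have e3 : ∀ c : ℝ, ∑ i, ∑ j, c * J i j = c := fun c => by
      simp only [← Finset.mul_sum]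
      rw [hsumJ, mul_one]
    have hTa : ∑ i, ∑ j, amat.1 i j * J i j = 0 := by
      have e : ∀ i j, amat.1 i j * J i j
          = (m.1 i j / 4) * J i j + (if i = j then sr i / 4 else 0) * J i j + α * J i j :=
        fun i j => by rw [hacoe]; ring
      simp only [e, Finset.sum_add_distrib]
      rw [e1, e2, e3 α, hαdef]
      ring
    have hTb : ∑ i, ∑ j, bmat.1 i j * J i j = 0 := by
      have e : ∀ i j, bmat.1 i j * J i j
          = (if i = j then sr i / 4 else 0) * J i j + (1/4) * J i j + α * J i j :=
        fun i j => by rw [hbcoe]; ring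
      simp only [e, Finset.sum_add_distrib]
      rw [e2, e3 α, e3 (1/4), hαdef]
      ring
    have hIa : ∫ x, qfun amat x ∂σ = 0 := by
      rw [integral_qfun σ hσprob hσsphere, ← hJdef]
      exact hTa
    have hIb : ∫ x, qfun bmat x ∂σ = 0 := by
      rw [integral_qfun σ hσprob hσsphere, ← hJdef]
      exact hTb
    have h1α : 0 ≤ 1 + α := by rw [hαdef]; linarith
    have h54α : 0 ≤ 5/4 + α := by rw [hαdef]; linarith
    -- CP decomposition of amat + rQ n
    have hAdec : amat + rQ n
        = (∑ p : Fin n × Fin n, (m.1 p.1 p.2 / 8) •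
            smat (fun k => (if k = p.1 then (1:ℝ) else 0) + (if k = p.2 then 1 else 0)))
          + (1 + α) • smat (fun _ => 1) := by
      apply Subtype.ext
      funext i j
      have hL : (amat + rQ n).1 i j = amat.1 i j + 1 := rfl
      have hR : ((∑ p : Fin n × Fin n, (m.1 p.1 p.2 / 8) •
            smat (fun k => (if k = p.1 then (1:ℝ) else 0) + (if k = p.2 then 1 else 0)))
          + (1 + α) • smat (fun _ => 1)).1 i j
          = (∑ p : Fin n × Fin n, m.1 p.1 p.2 / 8 *
              (((if i = p.1 then (1:ℝ) else 0) + (if i = p.2 then 1 else 0)) *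
               ((if j = p.1 then (1:ℝ) else 0) + (if j = p.2 then 1 else 0))))
            + (1 + α) * (1 * 1) := by
        simp [smat, Finset.sum_apply, mul_assoc]
      rw [hL, hR, hacoe, key_id m.1 m.2 i j]
      have hsr4 : (∑ l, m.1 i l) / 4 = sr i / 4 := rfl
      rw [hsr4]
      ring
    have hBdec : bmat + rQ n
        = (∑ i0 : Fin n, (sr i0 / 4) • smat (fun k => if k = i0 then (1:ℝ) else 0))
          + (5/4 + α) • smat (fun _ => 1) := by
      apply Subtype.ext
      funext i j
      have hL : (bmat + rQ n).1 i j = bmat.1 i j + 1 := rfl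
      have hR : ((∑ i0 : Fin n, (sr i0 / 4) • smat (fun k => if k = i0 then (1:ℝ) else 0))
          + (5/4 + α) • smat (fun _ => 1)).1 i j
          = (∑ i0 : Fin n, sr i0 / 4 *
              ((if i = i0 then (1:ℝ) else 0) * (if j = i0 then 1 else 0)))
            + (5/4 + α) * (1 * 1) := by
        simp [smat, Finset.sum_apply, mul_assoc]
      rw [hL, hR, hbcoe, diag_id sr i j]
      ring
    have hAmem : amat + rQ n ∈ CPQ n := by
      rw [hAdec]
      refine cpq_add (cpq_sum _ _ fun p _ => cpq_smul
        (div_nonneg (hm p.1 p.2) (by norm_num))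
        (cpq_smat _ fun k => by split_ifs <;> norm_num))
        (cpq_smul h1α (cpq_smat _ fun k => by norm_num))
    have hBmem : bmat + rQ n ∈ CPQ n := by
      rw [hBdec]
      refine cpq_add (cpq_sum _ _ fun i0 _ => cpq_smul
        (div_nonneg (hsr i0) (by norm_num))
        (cpq_smat _ fun k => by split_ifs <;> norm_num))
        (cpq_smul h54α (cpq_smat _ fun k => by norm_num))
    exact ⟨amat, ⟨hIa, hAmem⟩, bmat, ⟨hIb, hBmem⟩, hid⟩
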